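/- Let x_1, ..., x_k and theta_full, theta_lko be vectors in R^d, let V = span(x_1, ..., x_k), and let theta_res = theta_full + P_V(theta_lko - theta_full), where P_V is the orthogonal projection onto V. Let theta_approx = theta_T be the result of any gradient-based update: theta_0 = theta_full and theta_{t+1} = theta_t - alpha_t * sum_{(x,y) in D_t} (<theta_t, x> - y) x, where each alpha_t is a real number and each D_t is a finite set of pairs (x, y) with x in {x_1, ..., x_k} and y in R. Then ||theta_lko - theta_res|| <= ||theta_lko - theta_approx|| (Euclidean norm). -/

import Mathlib

open RealInnerProductSpace

/-- Optimality of the projective residual update among gradient-based updates: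
with `θ_res = θ_full + P_V (θ_lko - θ_full)`, `V = span(x₁,…,x_k)`, any
gradient-based update `θ_approx = θ T` using only feature vectors among
`x₁,…,x_k` satisfies `‖θ_lko - θ_res‖ ≤ ‖θ_lko - θ_approx‖`. -/
theorem stmt_6 {d k : ℕ} (x : Fin k → EuclideanSpace ℝ (Fin d))
    (θfull θlko : EuclideanSpace ℝ (Fin d)) (T : ℕ) (α : ℕ → ℝ)
    (D : ℕ → Finset (EuclideanSpace ℝ (Fin d) × ℝ))
    (hD : ∀ t, ∀ p ∈ D t, p.1 ∈ Set.range x)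
    (θ : ℕ → EuclideanSpace ℝ (Fin d)) (h0 : θ 0 = θfull)
    (hrec : ∀ t, θ (t + 1) = θ t - α t • ∑ p ∈ D t, (⟪θ t, p.1⟫ - p.2) • p.1) :
    ‖θlko - (θfull +
        (Submodule.orthogonalProjectionOnto (Submodule.span ℝ (Set.range x)) (θlko - θfull) :
          EuclideanSpace ℝ (Fin d)))‖ ≤ ‖θlko - θ T‖ := by
  set V := Submodule.span ℝ (Set.range x) with hV
  have hmem : ∀ t, θ t - θfull ∈ V := by
    intro t
    induction t with
    | zero => simp [h0]
    | succ t ih =>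
      rw [hrec t]
      have hs : (∑ p ∈ D t, (⟪θ t, p.1⟫ - p.2) • p.1) ∈ V := by
        apply Submodule.sum_mem
        intro p hp
        exact Submodule.smul_mem _ _ (Submodule.subset_span (hD t p hp))
      have : θ t - α t • ∑ p ∈ D t, (⟪θ t, p.1⟫ - p.2) • p.1 - θfull
          = (θ t - θfull) - α t • ∑ p ∈ D t, (⟪θ t, p.1⟫ - p.2) • p.1 := by abel
      rw [this]
      exact Submodule.sub_mem _ ih (Submodule.smul_mem _ _ hs)
  set u := θlko - θfull with hu
  have h1 : θlko - (θfull + (Submodule.orthogonalProjectionOnto V u : EuclideanSpace ℝ (Fin d)))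
      = u - (Submodule.orthogonalProjectionOnto V u : EuclideanSpace ℝ (Fin d)) := by
    rw [hu]; abel
  have h2 : θlko - θ T = u - (θ T - θfull) := by rw [hu]; abel
  rw [h1, h2, ← Submodule.starProjection_apply, Submodule.starProjection_minimal]
  exact ciInf_le ⟨0, fun r ⟨v, hv⟩ => hv ▸ norm_nonneg _⟩ (⟨θ T - θfull, hmem T⟩ : V)
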